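/- Let A be an R-algebra, free and finitely generated as a module over a commutative integral domain R, and K ⊇ Frac(R) a field such that K⊗A is split semisimple with primitive central idempotents (e_χ). Then there exists a unique finest partition Bl(A) of the index set such that for every block B ∈ Bl(A), the sum Σ_{χ∈B} e_χ lies in A, and the elements e_B = Σ_{χ∈B} e_χ are precisely the primitive idempotents of the centre Z(A). -/

import Mathlib

open Classical TensorProduct

section Aux

variable {B : Type*} [Ring B] {I : Type*} [Fintype I] {e : I → B}

private lemma eSum_mul_e (hidem : ∀ i, IsIdempotentElem (e i))
    (horth : ∀ i j, i ≠ j → e i * e j = 0) (T : Finset I) (j : I) :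
    (∑ k ∈ T, e k) * e j = if j ∈ T then e j else 0 := by
  rw [Finset.sum_mul]
  have h : ∀ i ∈ T, e i * e j = if i = j then e j else 0 := by
    intro i _
    by_cases hij : i = j
    · subst hij; rw [if_pos rfl]; exact hidem i
    · simp [hij, horth i j hij]
  rw [Finset.sum_congr rfl h, Finset.sum_ite_eq' T j fun _ => e j]

private lemma eSum_mul (hidem : ∀ i, IsIdempotentElem (e i))
    (horth : ∀ i j, i ≠ j → e i * e j = 0) (T T' : Finset I) :
    (∑ k ∈ T, e k) * (∑ k ∈ T', e k) = ∑ k ∈ T ∩ T', e k := by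
  rw [Finset.mul_sum]
  have h : ∀ j ∈ T', (∑ k ∈ T, e k) * e j = if j ∈ T then e j else 0 :=
    fun j _ => eSum_mul_e hidem horth T j
  rw [Finset.sum_congr rfl h, Finset.sum_ite_mem, Finset.inter_comm]

private lemma eSum_eq_zero_iff (hidem : ∀ i, IsIdempotentElem (e i))
    (hne : ∀ i, e i ≠ 0)
    (horth : ∀ i j, i ≠ j → e i * e j = 0) (T : Finset I) :
    (∑ k ∈ T, e k) = 0 ↔ T = ∅ := by
  constructor
  · intro h
    by_contra hT
    obtain ⟨j, hj⟩ := Finset.nonempty_iff_ne_empty.mpr hT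
    have := eSum_mul_e hidem horth T j
    rw [h, zero_mul, if_pos hj] at this
    exact hne j this.symm
  · rintro rfl; simp

private lemma eSum_inj (hidem : ∀ i, IsIdempotentElem (e i))
    (hne : ∀ i, e i ≠ 0)
    (horth : ∀ i j, i ≠ j → e i * e j = 0) {T T' : Finset I}
    (h : (∑ k ∈ T, e k) = ∑ k ∈ T', e k) : T = T' := by
  ext j
  have h2 := eSum_mul_e hidem horth T j
  rw [h, eSum_mul_e hidem horth T' j] at h2
  constructor
  · intro hj
    by_contra hj'
    rw [if_neg hj', if_pos hj] at h2
    exact hne j h2.symm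
  · intro hj
    by_contra hj'
    rw [if_pos hj, if_neg hj'] at h2
    exact hne j h2

/-- A central idempotent is the sum of the primitive idempotents it dominates. -/
private lemma central_idem_eq_eSum
    (hcentral : ∀ i, e i ∈ Subring.center B)
    (hidem : ∀ i, IsIdempotentElem (e i))
    (hsum : ∑ i, e i = 1)
    (hprim : ∀ i, ∀ f g : B,
      f ∈ Subring.center B → g ∈ Subring.center B →
      IsIdempotentElem f → IsIdempotentElem g → f * g = 0 → f + g = e i → f = 0 ∨ g = 0)
    {z : B} (hz : z ∈ Subring.center B) (hzi : IsIdempotentElem z) :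
    z = ∑ k ∈ Finset.univ.filter (fun i => z * e i = e i), e k := by
  have hcomm : ∀ i, e i * z = z * e i := fun i => Subring.mem_center_iff.mp hz (e i)
  have key : ∀ i, z * e i = if z * e i = e i then e i else 0 := by
    intro i
    by_cases hc : z * e i = e i
    · rw [if_pos hc, hc]
    · rw [if_neg hc]
      have hfc : z * e i ∈ Subring.center B := Subring.mul_mem _ hz (hcentral i)
      have hgc : e i - z * e i ∈ Subring.center B := Subring.sub_mem _ (hcentral i) hfc
      have hfi : IsIdempotentElem (z * e i) := by
        show z * e i * (z * e i) = z * e i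
        calc z * e i * (z * e i) = z * (e i * z) * e i := by noncomm_ring
          _ = z * (z * e i) * e i := by rw [hcomm i]
          _ = (z * z) * (e i * e i) := by noncomm_ring
          _ = z * e i := by rw [hzi, hidem i]
      have hgi : IsIdempotentElem (e i - z * e i) := by
        show (e i - z * e i) * (e i - z * e i) = e i - z * e i
        have h1 : e i * (z * e i) = z * e i := by
          calc e i * (z * e i) = (e i * z) * e i := by rw [mul_assoc]
            _ = z * (e i * e i) := by rw [hcomm i, mul_assoc]
            _ = z * e i := by rw [hidem i]
        have h2 : (z * e i) * e i = z * e i := by rw [mul_assoc, hidem i]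
        rw [sub_mul, mul_sub, mul_sub, hidem i, h1, h2, hfi]
        abel
      have hfg : (z * e i) * (e i - z * e i) = 0 := by
        have h2 : (z * e i) * e i = z * e i := by rw [mul_assoc, hidem i]
        rw [mul_sub, h2, hfi, sub_self]
      have hsum' : (z * e i) + (e i - z * e i) = e i := by abel
      rcases hprim i _ _ hfc hgc hfi hgi hfg hsum' with h | h
      · exact h
      · exact absurd (by rw [sub_eq_zero] at h; exact h.symm) hc
  calc z = z * 1 := (mul_one z).symm
    _ = ∑ i, z * e i := by rw [← hsum, Finset.mul_sum]
    _ = ∑ i, if z * e i = e i then e i else 0 := Finset.sum_congr rfl fun i _ => key i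
    _ = ∑ k ∈ Finset.univ.filter (fun i => z * e i = e i), e k := (Finset.sum_filter _ _).symm

end Aux

private lemma comm_range_central
    {R : Type*} [CommRing R] {K : Type*} [Field K] [Algebra R K]
    {A : Type*} [Ring A] [Algebra R A]
    (ι : A →ₐ[R] (K ⊗[R] A)) (hι : ι = Algebra.TensorProduct.includeRight)
    {z : K ⊗[R] A} (hz : ∀ a ∈ Set.range ι, z * a = a * z) :
    z ∈ Subring.center (K ⊗[R] A) := by
  rw [Subring.mem_center_iff]
  intro g
  induction g using TensorProduct.induction_on with
  | zero => simp
  | tmul k a =>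
      have h1 : z * ((1:K) ⊗ₜ[R] a) = ((1:K) ⊗ₜ[R] a) * z :=
        hz _ ⟨a, by rw [hι]; rfl⟩
      have h2 : (k ⊗ₜ[R] a) = k • ((1:K) ⊗ₜ[R] a) := by
        rw [TensorProduct.smul_tmul', smul_eq_mul, mul_one]
      rw [h2, smul_mul_assoc, mul_smul_comm, h1]
  | add x y hx hy => rw [add_mul, mul_add, hx, hy]

theorem blocks_exist_unique
    (R : Type*) [CommRing R] [IsDomain R]
    (K : Type*) [Field K] [Algebra R K] (hRK : Function.Injective (algebraMap R K))
    (A : Type*) [Ring A] [Algebra R A] [Module.Free R A] [Module.Finite R A]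
    [IsSemisimpleRing (K ⊗[R] A)]
    (I : Type*) [Fintype I]
    (e : I → K ⊗[R] A)
    (hcentral : ∀ i, e i ∈ Subring.center (K ⊗[R] A))
    (hidem : ∀ i, IsIdempotentElem (e i))
    (hne : ∀ i, e i ≠ 0)
    (horth : ∀ i j, i ≠ j → e i * e j = 0)
    (hsum : ∑ i, e i = 1)
    (hprim : ∀ i, ∀ f g : K ⊗[R] A,
      f ∈ Subring.center (K ⊗[R] A) → g ∈ Subring.center (K ⊗[R] A) →
      IsIdempotentElem f → IsIdempotentElem g → f * g = 0 → f + g = e i → f = 0 ∨ g = 0)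
    (ι : A →ₐ[R] K ⊗[R] A) (hι : ι = Algebra.TensorProduct.includeRight) :
    ∃! S : Setoid I,
      ((∀ i : I, (∑ j ∈ Finset.univ.filter fun j => S.r i j, e j) ∈ Set.range ι) ∧
        ∀ S' : Setoid I,
          (∀ i : I, (∑ j ∈ Finset.univ.filter fun j => S'.r i j, e j) ∈ Set.range ι) →
          S ≤ S') ∧
      (∀ z : K ⊗[R] A,
        (z ∈ Set.range ι ∧ (∀ a ∈ Set.range ι, z * a = a * z) ∧
          IsIdempotentElem z ∧ z ≠ 0 ∧
          (∀ f g : K ⊗[R] A, f ∈ Set.range ι → g ∈ Set.range ι →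
            (∀ a ∈ Set.range ι, f * a = a * f) → (∀ a ∈ Set.range ι, g * a = a * g) →
            IsIdempotentElem f → IsIdempotentElem g → f * g = 0 → f + g = z →
            f = 0 ∨ g = 0))
          ↔ ∃ i : I, z = ∑ j ∈ Finset.univ.filter fun j => S.r i j, e j) := by
  -- closure properties of the image of `A`
  have hr_one : (1 : K ⊗[R] A) ∈ Set.range ι := ⟨1, map_one ι⟩
  have hr_mul : ∀ x y : K ⊗[R] A, x ∈ Set.range ι → y ∈ Set.range ι →
      x * y ∈ Set.range ι := by
    rintro _ _ ⟨a, rfl⟩ ⟨b, rfl⟩; exact ⟨a * b, map_mul ι a b⟩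
  have hr_sub : ∀ x y : K ⊗[R] A, x ∈ Set.range ι → y ∈ Set.range ι →
      x - y ∈ Set.range ι := by
    rintro _ _ ⟨a, rfl⟩ ⟨b, rfl⟩; exact ⟨a - b, map_sub ι a b⟩
  -- "good" subsets: those whose idempotent sum lies in the image of `A`
  set good : Finset I → Prop := fun T => (∑ k ∈ T, e k) ∈ Set.range ι with hgood_def
  have hgood_univ : good Finset.univ := by
    show (∑ k, e k) ∈ Set.range ι
    rw [hsum]; exact hr_one
  have hgood_inter : ∀ T T', good T → good T' → good (T ∩ T') := by
    intro T T' hT hT'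
    show (∑ k ∈ T ∩ T', e k) ∈ Set.range ι
    rw [← eSum_mul hidem horth]
    exact hr_mul _ _ hT hT'
  have hgood_sdiff : ∀ T T', good T → good T' → good (T \ T') := by
    intro T T' hT hT'
    show (∑ k ∈ T \ T', e k) ∈ Set.range ι
    have h1 : (∑ k ∈ T \ T', e k) = (∑ k ∈ T, e k) - ∑ k ∈ T ∩ T', e k := by
      rw [← Finset.sdiff_inter_self_left T T',
        Finset.sum_sdiff_eq_sub Finset.inter_subset_left]
    rw [h1]
    exact hr_sub _ _ hT (hgood_inter T T' hT hT')
  -- blocks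
  set Bl : I → Finset I :=
    fun i => Finset.univ.filter (fun j => ∀ T : Finset I, good T → i ∈ T → j ∈ T)
    with hBl_def
  have mem_Bl : ∀ i j, j ∈ Bl i ↔ ∀ T : Finset I, good T → i ∈ T → j ∈ T := by
    intro i j; simp [hBl_def]
  have self_mem_Bl : ∀ i, i ∈ Bl i := fun i => (mem_Bl i i).mpr fun T _ h => h
  have Bl_subset : ∀ i (T : Finset I), good T → i ∈ T → Bl i ⊆ T :=
    fun i T hT hi j hj => (mem_Bl i j).mp hj T hT hi
  -- each block is good
  have good_Bl : ∀ i, good (Bl i) := by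
    intro i
    set f : Finset I → Finset I :=
      fun T => if good T ∧ i ∈ T then T else Finset.univ with hf_def
    have mem_inf : ∀ (s : Finset (Finset I)) (j : I),
        j ∈ s.inf f ↔ ∀ T ∈ s, j ∈ f T := by
      intro s
      induction s using Finset.induction_on with
      | empty => intro j; simp [Finset.inf_empty, Finset.top_eq_univ]
      | @insert T s hTs ih =>
          intro j
          rw [Finset.inf_insert, Finset.inf_eq_inter, Finset.mem_inter]
          simp [ih j]
    have good_inf : ∀ s : Finset (Finset I), good (s.inf f) := by
      intro s
      induction s using Finset.induction_on with
      | empty => rw [Finset.inf_empty, Finset.top_eq_univ]; exact hgood_univ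
      | @insert T s hTs ih =>
          rw [Finset.inf_insert, Finset.inf_eq_inter]
          refine hgood_inter _ _ ?_ ih
          show good (if good T ∧ i ∈ T then T else Finset.univ)
          by_cases hc : good T ∧ i ∈ T
          · rw [if_pos hc]; exact hc.1
          · rw [if_neg hc]; exact hgood_univ
    have hBi : Bl i = Finset.univ.inf f := by
      ext j
      rw [mem_inf, mem_Bl]
      constructor
      · intro h T _
        show j ∈ (if good T ∧ i ∈ T then T else Finset.univ)
        split_ifs with hc
        · exact h T hc.1 hc.2
        · exact Finset.mem_univ j
      · intro h T hT hiT
        have h2 : j ∈ (if good T ∧ i ∈ T then T else Finset.univ) :=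
          h T (Finset.mem_univ T)
        rwa [if_pos ⟨hT, hiT⟩] at h2
    rw [hBi]
    exact good_inf Finset.univ
  -- basic block combinatorics
  have Bl_symm : ∀ i j, j ∈ Bl i → i ∈ Bl j := by
    intro i j hj
    by_contra hij
    have hC : good (Bl i \ Bl j) := hgood_sdiff _ _ (good_Bl i) (good_Bl j)
    have hiC : i ∈ Bl i \ Bl j := Finset.mem_sdiff.mpr ⟨self_mem_Bl i, hij⟩
    have := Bl_subset i _ hC hiC hj
    exact (Finset.mem_sdiff.mp this).2 (self_mem_Bl j)
  have Bl_eq : ∀ i j, j ∈ Bl i → Bl i = Bl j := by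
    intro i j hj
    apply Finset.Subset.antisymm
    · exact Bl_subset i (Bl j) (good_Bl j) (Bl_symm i j hj)
    · exact Bl_subset j (Bl i) (good_Bl i) hj
  -- the setoid
  set S : Setoid I :=
    ⟨fun i j => j ∈ Bl i,
      ⟨self_mem_Bl, fun {i j} h => Bl_symm i j h,
        fun {i j k} hij hjk => (Bl_eq i j hij) ▸ hjk⟩⟩ with hS_def
  have filter_S : ∀ i, (Finset.univ.filter fun j => S.r i j) = Bl i := by
    intro i; ext j
    simp only [Finset.mem_filter, Finset.mem_univ, true_and]
    exact Iff.rfl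
  have hgoodS : ∀ i : I,
      (∑ j ∈ Finset.univ.filter fun j => S.r i j, e j) ∈ Set.range ι := by
    intro i; rw [filter_S i]; exact good_Bl i
  have hfinest : ∀ S' : Setoid I,
      (∀ i : I, (∑ j ∈ Finset.univ.filter fun j => S'.r i j, e j) ∈ Set.range ι) →
      S ≤ S' := by
    intro S' hS'
    rw [Setoid.le_def]
    intro i j hij
    have hT' : good (Finset.univ.filter fun k => S'.r i k) := hS' i
    have hiT' : i ∈ Finset.univ.filter fun k => S'.r i k := by
      simp only [Finset.mem_filter, Finset.mem_univ, true_and]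
      exact S'.refl i
    have hmem := Bl_subset i _ hT' hiT' hij
    simpa using hmem
  have hcen : ∀ T0 : Finset I, (∑ k ∈ T0, e k) ∈ Subring.center (K ⊗[R] A) :=
    fun T0 => Subring.sum_mem _ fun k _ => hcentral k
  have hcomm_of_center : ∀ w : K ⊗[R] A, w ∈ Subring.center (K ⊗[R] A) →
      ∀ a ∈ Set.range ι, w * a = a * w :=
    fun w hw a _ => (Subring.mem_center_iff.mp hw a).symm
  have hidem_sum : ∀ T0 : Finset I, IsIdempotentElem (∑ k ∈ T0, e k) := by
    intro T0
    show _ * _ = _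
    rw [eSum_mul hidem horth, Finset.inter_self]
  refine ⟨S, ⟨⟨hgoodS, hfinest⟩, ?_⟩,
    fun S' hS' => le_antisymm (hS'.1.2 S hgoodS) (hfinest S' hS'.1.1)⟩
  intro z
  constructor
  · rintro ⟨hzr, hzcomm, hzi, hzne, hzprim⟩
    have hzc : z ∈ Subring.center (K ⊗[R] A) := comm_range_central ι hι hzcomm
    set T := Finset.univ.filter (fun i => z * e i = e i) with hT_def
    have hzT : z = ∑ k ∈ T, e k :=
      central_idem_eq_eSum hcentral hidem hsum hprim hzc hzi
    have hTgood : good T := by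
      show _ ∈ Set.range ι; rw [← hzT]; exact hzr
    have hTne : T ≠ ∅ := by
      intro h; apply hzne; rw [hzT, h]; simp
    obtain ⟨i, hiT⟩ := Finset.nonempty_iff_ne_empty.mpr hTne
    have hBsub : Bl i ⊆ T := Bl_subset i T hTgood hiT
    refine ⟨i, ?_⟩
    rw [filter_S i]
    have hsplit : (∑ k ∈ T \ Bl i, e k) + (∑ k ∈ Bl i, e k) = z := by
      rw [hzT]; exact Finset.sum_sdiff hBsub
    have hf_r : (∑ k ∈ T \ Bl i, e k) ∈ Set.range ι :=
      hgood_sdiff T (Bl i) hTgood (good_Bl i)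
    have hfg : (∑ k ∈ T \ Bl i, e k) * (∑ k ∈ Bl i, e k) = 0 := by
      rw [eSum_mul hidem horth]
      have hdisj : (T \ Bl i) ∩ Bl i = ∅ := by
        ext k
        simp +contextual [Finset.mem_sdiff]
      rw [hdisj]; simp
    rcases hzprim _ _ hf_r (good_Bl i) (hcomm_of_center _ (hcen _))
      (hcomm_of_center _ (hcen _)) (hidem_sum _) (hidem_sum _) hfg hsplit with h0 | h0
    · have hTB : T \ Bl i = ∅ := (eSum_eq_zero_iff hidem hne horth _).mp h0
      have hTeq : T = Bl i := by
        refine Finset.Subset.antisymm (fun k hk => ?_) hBsub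
        by_contra hk'
        exact (Finset.notMem_empty k) (hTB ▸ Finset.mem_sdiff.mpr ⟨hk, hk'⟩)
      rw [hzT, hTeq]
    · exfalso
      have hB0 : Bl i = ∅ := (eSum_eq_zero_iff hidem hne horth _).mp h0
      exact (Finset.notMem_empty i) (hB0 ▸ self_mem_Bl i)
  · rintro ⟨i, rfl⟩
    rw [filter_S i]
    refine ⟨good_Bl i, hcomm_of_center _ (hcen _), hidem_sum _, ?_, ?_⟩
    · intro h0
      have hB0 : Bl i = ∅ := (eSum_eq_zero_iff hidem hne horth _).mp h0
      exact (Finset.notMem_empty i) (hB0 ▸ self_mem_Bl i)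
    · intro f g hf_r hg_r hfc hgc hfi hgi hfg hfgsum
      have hfcen : f ∈ Subring.center (K ⊗[R] A) := comm_range_central ι hι hfc
      have hgcen : g ∈ Subring.center (K ⊗[R] A) := comm_range_central ι hι hgc
      set Tf := Finset.univ.filter (fun k => f * e k = e k) with hTf_def
      set Tg := Finset.univ.filter (fun k => g * e k = e k) with hTg_def
      have hfT : f = ∑ k ∈ Tf, e k :=
        central_idem_eq_eSum hcentral hidem hsum hprim hfcen hfi
      have hgT : g = ∑ k ∈ Tg, e k :=
        central_idem_eq_eSum hcentral hidem hsum hprim hgcen hgi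
      have hTfgood : good Tf := by
        show _ ∈ Set.range ι; rw [← hfT]; exact hf_r
      have hTggood : good Tg := by
        show _ ∈ Set.range ι; rw [← hgT]; exact hg_r
      have hdisj : Tf ∩ Tg = ∅ := by
        rw [hfT, hgT, eSum_mul hidem horth] at hfg
        exact (eSum_eq_zero_iff hidem hne horth _).mp hfg
      have hunion : Tf ∪ Tg = Bl i := by
        apply eSum_inj hidem hne horth
        rw [Finset.sum_union (Finset.disjoint_iff_inter_eq_empty.mpr hdisj)]
        rw [← hfT, ← hgT]
        exact hfgsum
      have hiTfg : i ∈ Tf ∪ Tg := hunion ▸ self_mem_Bl i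
      rcases Finset.mem_union.mp hiTfg with hi | hi
      · right
        have hBf : Bl i ⊆ Tf := Bl_subset i Tf hTfgood hi
        have hTg0 : Tg = ∅ := by
          ext k
          simp only [Finset.notMem_empty, iff_false]
          intro hk
          have hk2 : k ∈ Bl i := hunion ▸ Finset.mem_union_right Tf hk
          exact (Finset.notMem_empty k)
            (hdisj ▸ Finset.mem_inter.mpr ⟨hBf hk2, hk⟩)
        rw [hgT, hTg0, Finset.sum_empty]
      · left
        have hBg : Bl i ⊆ Tg := Bl_subset i Tg hTggood hi
        have hTf0 : Tf = ∅ := by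
          ext k
          simp only [Finset.notMem_empty, iff_false]
          intro hk
          have hk2 : k ∈ Bl i := hunion ▸ Finset.mem_union_left Tg hk
          exact (Finset.notMem_empty k)
            (hdisj ▸ Finset.mem_inter.mpr ⟨hk, hBg hk2⟩)
        rw [hfT, hTf0, Finset.sum_empty]
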